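/- Let E be a real Banach space, y₀ ∈ E, ε ≥ 0, and let f : E → E and Df : E → (E →L[ℝ] E) be such that Df is a Gateaux derivative of f on the closed ball of radius 2 centred at y₀, and such that for every y in that closed ball one has (Df y − Df y₀) '' closedBall 0 1 ⊆ ε • ((Df y₀) '' closedBall 0 1). Then for all y₁, y₂ in the closed ball of radius 2 centred at y₀ one has ‖f y₂ − f y₁‖ ≤ (1 + ε) · ‖Df y₀‖ · ‖y₂ − y₁‖; in particular f is Lipschitz, hence continuous, on that ball. -/
import Mathlib

open Pointwise Metric

variable {E : Type*} [NormedAddCommGroup E] [NormedSpace ℝ E]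

/-- `Df` is a Gateaux derivative of `f` on the set `S`: for every `y ∈ S` and every
direction `v`, the map `t ↦ f (y + t • v)` has derivative `Df y v` at `t = 0`. -/
def HasGateauxDerivOn (f : E → E) (Df : E → E →L[ℝ] E) (S : Set E) : Prop :=
  ∀ y ∈ S, ∀ v : E, HasDerivAt (fun t : ℝ => f (y + t • v)) (Df y v) 0

/-- under the Colombeau-type condition on the closed ball of radius 2 about `y₀`,
`f` satisfies the Lipschitz-type estimate `‖f y₂ − f y₁‖ ≤ (1 + ε) * ‖Df y₀‖ * ‖y₂ − y₁‖`
on that ball. -/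
theorem stmt2 [CompleteSpace E] (y₀ : E) (ε : ℝ) (hε : 0 ≤ ε)
    (f : E → E) (Df : E → E →L[ℝ] E)
    (hgat : HasGateauxDerivOn f Df (closedBall y₀ 2))
    (hcolo : ∀ y ∈ closedBall y₀ 2,
      ⇑(Df y - Df y₀) '' closedBall (0 : E) 1 ⊆ ε • (⇑(Df y₀) '' closedBall (0 : E) 1)) :
    ∀ y₁ ∈ closedBall y₀ 2, ∀ y₂ ∈ closedBall y₀ 2,
      ‖f y₂ - f y₁‖ ≤ (1 + ε) * ‖Df y₀‖ * ‖y₂ - y₁‖ := by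
  -- pointwise bound on the difference of derivatives
  have key : ∀ y ∈ closedBall y₀ 2, ∀ v : E, ‖Df y v‖ ≤ (1 + ε) * ‖Df y₀‖ * ‖v‖ := by
    intro y hy v
    have hdiff : ‖(Df y - Df y₀) v‖ ≤ ε * ‖Df y₀‖ * ‖v‖ := by
      rcases eq_or_ne v 0 with rfl | hv
      · simp
      · have hvn : (0 : ℝ) < ‖v‖ := norm_pos_iff.mpr hv
        set u : E := ‖v‖⁻¹ • v with hu
        have hub : u ∈ closedBall (0 : E) 1 := by
          simp only [mem_closedBall, dist_zero_right, hu, norm_smul, norm_inv, norm_norm]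
          rw [inv_mul_cancel₀ hvn.ne']
        have hmem : (Df y - Df y₀) u ∈ ε • (⇑(Df y₀) '' closedBall (0 : E) 1) :=
          hcolo y hy ⟨u, hub, rfl⟩
        obtain ⟨w, ⟨z, hz, rfl⟩, hwe⟩ := hmem
        have hbd : ‖(Df y - Df y₀) u‖ ≤ ε * ‖Df y₀‖ := by
          rw [← hwe, norm_smul, Real.norm_eq_abs, abs_of_nonneg hε]
          have : ‖Df y₀ z‖ ≤ ‖Df y₀‖ * ‖z‖ := (Df y₀).le_opNorm z
          have hz1 : ‖z‖ ≤ 1 := by simpa [mem_closedBall, dist_zero_right] using hz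
          have : ‖Df y₀ z‖ ≤ ‖Df y₀‖ := le_trans this (by nlinarith [(Df y₀).opNorm_nonneg])
          exact mul_le_mul_of_nonneg_left this hε
        have hv_eq : v = ‖v‖ • u := by
          rw [hu, smul_smul, mul_inv_cancel₀ hvn.ne', one_smul]
        calc ‖(Df y - Df y₀) v‖ = ‖v‖ * ‖(Df y - Df y₀) u‖ := by
              rw [show (Df y - Df y₀) v = ‖v‖ • ((Df y - Df y₀) u) from by
                rw [← map_smul, ← hv_eq], norm_smul, Real.norm_eq_abs,
                abs_of_nonneg (norm_nonneg v)]
          _ ≤ ‖v‖ * (ε * ‖Df y₀‖) := by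
              exact mul_le_mul_of_nonneg_left hbd (norm_nonneg v)
          _ = ε * ‖Df y₀‖ * ‖v‖ := by ring
    have : ‖Df y v‖ ≤ ‖Df y₀ v‖ + ‖(Df y - Df y₀) v‖ := by
      have : Df y v = Df y₀ v + (Df y - Df y₀) v := by simp
      rw [this]; exact norm_add_le _ _
    have h0 : ‖Df y₀ v‖ ≤ ‖Df y₀‖ * ‖v‖ := (Df y₀).le_opNorm v
    nlinarith
  intro y₁ hy₁ y₂ hy₂
  set v := y₂ - y₁ with hv
  -- membership of segment points
  have hseg : ∀ t ∈ Set.Icc (0 : ℝ) 1, y₁ + t • v ∈ closedBall y₀ 2 := by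
    intro t ht
    have : y₁ + t • v = (1 - t) • y₁ + t • y₂ := by
      rw [hv]; module
    rw [this]
    exact (convex_closedBall y₀ 2) hy₁ hy₂ (by linarith [ht.2]) ht.1 (by ring)
  -- derivative of g
  set g : ℝ → E := fun t => f (y₁ + t • v) with hg
  have hderiv : ∀ t ∈ Set.Icc (0 : ℝ) 1,
      HasDerivWithinAt g (Df (y₁ + t • v) v) (Set.Icc (0 : ℝ) 1) t := by
    intro t ht
    have h1 : HasDerivAt (fun s : ℝ => f (y₁ + t • v + s • v)) (Df (y₁ + t • v) v) 0 :=
      hgat _ (hseg t ht) v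
    have h2 : HasDerivAt (fun s : ℝ => s - t) 1 t := by
      simpa using (hasDerivAt_id t).sub_const t
    have h3 : HasDerivAt g (Df (y₁ + t • v) v) t := by
      have hcomp : HasDerivAt ((fun s : ℝ => f (y₁ + t • v + s • v)) ∘ (fun s : ℝ => s - t))
          ((1 : ℝ) • Df (y₁ + t • v) v) t := HasDerivAt.scomp_of_eq (hg := h1) (hh := h2) (hy := (sub_self t).symm)
      simp only [one_smul] at hcomp
      convert hcomp using 1
      funext s
      simp only [Function.comp, hg]
      congr 1
      module
    exact h3.hasDerivWithinAt
  have hbound : ∀ t ∈ Set.Ico (0 : ℝ) 1, ‖Df (y₁ + t • v) v‖ ≤ (1 + ε) * ‖Df y₀‖ * ‖v‖ := by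
    intro t ht
    exact key _ (hseg t ⟨ht.1, ht.2.le⟩) v
  have := norm_image_sub_le_of_norm_deriv_le_segment' hderiv hbound 1 (Set.right_mem_Icc.2 zero_le_one)
  simpa [hg, hv] using this
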